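/- Let e_v, v ∈ V, be the standard orthonormal basis of ℝ^V with m = |V| ≥ 2, and for 0 < μ ≤ 1 define ℓ_v^μ(x) := max{0, (n_v^μ)ᵀx − d_μ} with n_v^μ := (1/(μm)) Σ_{w≠v} (e_v − e_w) and d_μ := ((1−μ)m − 1)/(μm). Then ℓ_v^μ(e_v) = 1, ℓ_v^μ((1−μ)e_v + μe_w) = 0 for all w ≠ v, and ℓ_v^μ(x) = 0 for all x in the standard simplex S outside the corner S_v^μ. -/

import Mathlib

/-- The corner Lagrange function `ℓ_v^μ(x) = max{0, (n_v^μ)ᵀx − d_μ}` satisfies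
`ℓ_v^μ(e_v) = 1`, vanishes at the corner vertices `(1−μ)e_v + μe_w`, and vanishes
on the standard simplex outside the corner `S_v^μ`. -/
theorem stmt_4 {V : Type*} [Fintype V] [DecidableEq V]
    (hm : 2 ≤ Fintype.card V)
    (μ : ℝ) (hμ0 : 0 < μ) (hμ1 : μ ≤ 1) (v : V) :
    let m : ℝ := Fintype.card V
    let e : V → (V → ℝ) := fun u => Pi.single u 1
    let n : V → ℝ := (1 / (μ * m)) • ∑ w ∈ Finset.univ.erase v, (e v - e w)
    let d : ℝ := ((1 - μ) * m - 1) / (μ * m)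
    let ℓ : (V → ℝ) → ℝ := fun x => max 0 (∑ u, n u * x u - d)
    ℓ (e v) = 1 ∧
    (∀ w : V, w ≠ v → ℓ ((1 - μ) • e v + μ • e w) = 0) ∧
    (∀ x ∈ convexHull ℝ (Set.range e),
      x ∉ convexHull ℝ (({e v} : Set (V → ℝ)) ∪
        {p | ∃ w, w ≠ v ∧ p = (1 - μ) • e v + μ • e w}) → ℓ x = 0) := by
  intro m e n d ℓ
  have hm2 : (2:ℝ) ≤ m := by
    show (2:ℝ) ≤ (Fintype.card V : ℝ)
    exact_mod_cast hm
  have hmpos : (0:ℝ) < m := by linarith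
  have hμm : (0:ℝ) < μ * m := mul_pos hμ0 hmpos
  have he : ∀ u j : V, e u j = if j = u then (1:ℝ) else 0 := fun u j => Pi.single_apply u 1 j
  have hesum : ∀ u : V, ∑ j, e u j = 1 := by
    intro u
    simp only [he]
    rw [Finset.sum_ite_eq' Finset.univ u (fun _ => (1:ℝ))]
    simp
  -- formula for the normal vector
  have hn : ∀ u : V, n u = (if u = v then m - 1 else -1) / (μ * m) := by
    intro u
    show (1 / (μ * m)) * (∑ w ∈ Finset.univ.erase v, (e v - e w)) u = _
    rw [Finset.sum_apply]
    have hcast : ((Fintype.card V - 1 : ℕ) : ℝ) = m - 1 := by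
      have h1 : 1 ≤ Fintype.card V := by omega
      push_cast [h1]
      ring
    have hkey : ∑ w ∈ Finset.univ.erase v, (e v - e w) u
        = (if u = v then m - 1 else -1) := by
      simp only [Pi.sub_apply, he]
      rw [Finset.sum_sub_distrib, Finset.sum_const,
        Finset.card_erase_of_mem (Finset.mem_univ v), Finset.card_univ, nsmul_eq_mul, hcast]
      rw [Finset.sum_ite_eq (Finset.univ.erase v) u (fun _ => (1:ℝ))]
      by_cases huv : u = v
      · simp [huv]
      · simp [huv, Finset.mem_erase]
    rw [hkey]
    ring
  -- the dot product
  have hdot : ∀ x : V → ℝ, ∑ u, n u * x u = (m * x v - ∑ u, x u) / (μ * m) := by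
    intro x
    simp only [hn]
    simp only [div_mul_eq_mul_div]
    rw [← Finset.sum_div]
    congr 1
    have h : ∀ u : V, (if u = v then m - 1 else -1) * x u
        = (if u = v then m * x u else 0) - x u := by
      intro u; by_cases h : u = v
      · simp [h]; ring
      · simp [h]
    simp only [h]
    rw [Finset.sum_sub_distrib, Finset.sum_ite_eq' Finset.univ v (fun u => m * x u)]
    simp
  have hval : ∀ x : V → ℝ, ∑ u, x u = 1 → ∑ u, n u * x u - d = (x v - (1 - μ)) / μ := by
    intro x hx
    rw [hdot, hx]
    show (m * x v - 1) / (μ * m) - ((1 - μ) * m - 1) / (μ * m) = _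
    field_simp
    ring
  have hevv : e v v = 1 := by rw [he]; simp
  refine ⟨?_, ?_, ?_⟩
  · -- ℓ (e v) = 1
    show max 0 (∑ u, n u * e v u - d) = 1
    rw [hval _ (hesum v), hevv]
    have : (1 - (1 - μ)) / μ = 1 := by field_simp; ring
    rw [this]
    exact max_eq_right zero_le_one
  · -- vanishes at corner vertices
    intro w hw
    show max 0 (∑ u, n u * ((1 - μ) • e v + μ • e w) u - d) = 0
    have hxsum : ∑ u, ((1 - μ) • e v + μ • e w) u = 1 := by
      simp only [Pi.add_apply, Pi.smul_apply, smul_eq_mul]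
      rw [Finset.sum_add_distrib, ← Finset.mul_sum, ← Finset.mul_sum, hesum, hesum]
      ring
    have hewv : e w v = 0 := by rw [he]; exact if_neg (fun h => hw h.symm)
    have hxv : ((1 - μ) • e v + μ • e w) v = 1 - μ := by
      simp only [Pi.add_apply, Pi.smul_apply, smul_eq_mul, hevv, hewv]
      ring
    rw [hval _ hxsum, hxv]
    simp
  · -- vanishes outside the corner
    intro x hx hnot
    have hstd : convexHull ℝ (Set.range e) = stdSimplex ℝ V := by
      have h : e = (fun i j : V => @ite ℝ (i = j) (Classical.propDecidable _) 1 0) := by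
        funext u j
        rw [he]
        by_cases hj : j = u
        · rw [if_pos hj, if_pos hj.symm]
        · rw [if_neg hj, if_neg (fun h => hj h.symm)]
      rw [h]
      convert convexHull_basis_eq_stdSimplex ℝ V
    rw [hstd] at hx
    obtain ⟨hx0, hx1⟩ := hx
    show max 0 (∑ u, n u * x u - d) = 0
    rw [hval _ hx1]
    -- it suffices that x v ≤ 1 - μ
    rcases le_or_gt (x v) (1 - μ) with hle | hlt
    · exact max_eq_left (div_nonpos_of_nonpos_of_nonneg (by linarith) hμ0.le)
    · -- otherwise x is in the corner: contradiction
      exfalso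
      apply hnot
      set S : Set (V → ℝ) := ({e v} : Set (V → ℝ)) ∪
        {p | ∃ w, w ≠ v ∧ p = (1 - μ) • e v + μ • e w}
      set wt : V → ℝ := fun u => if u = v then (x v - (1 - μ)) / μ else x u / μ with hwt
      set z : V → (V → ℝ) := fun u => if u = v then e v else (1 - μ) • e v + μ • e u with hz
      have hw0 : ∀ u ∈ Finset.univ, 0 ≤ wt u := by
        intro u _
        by_cases h : u = v
        · simp only [hwt, if_pos h]
          exact div_nonneg (by linarith) hμ0.le
        · simp only [hwt, if_neg h]
          exact div_nonneg (hx0 u) hμ0.le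
      have hsum_er : ∑ u ∈ Finset.univ.erase v, x u = 1 - x v := by
        rw [Finset.sum_erase_eq_sub (Finset.mem_univ v), hx1]
      have hwsum : ∑ u, wt u = 1 := by
        rw [← Finset.add_sum_erase _ _ (Finset.mem_univ v)]
        have h1 : wt v = (x v - (1 - μ)) / μ := by simp [hwt]
        have h2 : ∑ u ∈ Finset.univ.erase v, wt u
            = ∑ u ∈ Finset.univ.erase v, x u / μ := by
          apply Finset.sum_congr rfl
          intro u hu
          simp [hwt, (Finset.mem_erase.mp hu).1]
        rw [h1, h2, ← Finset.sum_div, hsum_er]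
        field_simp
        ring
      have hzmem : ∀ u ∈ Finset.univ, z u ∈ S := by
        intro u _
        by_cases h : u = v
        · simp only [hz, if_pos h]
          exact Set.mem_union_left _ rfl
        · simp only [hz, if_neg h]
          exact Set.mem_union_right _ ⟨u, h, rfl⟩
      have hcm : Finset.univ.centerMass wt z ∈ convexHull ℝ S :=
        Finset.centerMass_mem_convexHull _ hw0 (by rw [hwsum]; norm_num) hzmem
      have heq : Finset.univ.centerMass wt z = x := by
        rw [Finset.centerMass_eq_of_sum_1 _ _ hwsum]
        funext j
        rw [Finset.sum_apply]
        simp only [Pi.smul_apply, smul_eq_mul]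
        rw [← Finset.add_sum_erase _ _ (Finset.mem_univ v)]
        have hterm : ∀ u ∈ Finset.univ.erase v,
            wt u * z u j = (x u / μ) * ((1 - μ) * e v j) + x u * e u j := by
          intro u hu
          have h := (Finset.mem_erase.mp hu).1
          simp only [hwt, hz, if_neg h, Pi.add_apply, Pi.smul_apply, smul_eq_mul]
          field_simp
        rw [Finset.sum_congr rfl hterm, Finset.sum_add_distrib]
        have hA : ∑ u ∈ Finset.univ.erase v, (x u / μ) * ((1 - μ) * e v j)
            = (1 - x v) / μ * ((1 - μ) * e v j) := by
          rw [← Finset.sum_mul, ← Finset.sum_div, hsum_er]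
        rw [hA]
        have hwv : wt v * z v j = (x v - (1 - μ)) / μ * e v j := by
          simp only [hwt, hz, if_true, eq_self_iff_true]
        rw [hwv]
        by_cases hj : j = v
        · have hB : ∑ u ∈ Finset.univ.erase v, x u * e u j = 0 := by
            apply Finset.sum_eq_zero
            intro u hu
            rw [he, if_neg, mul_zero]
            intro h
            exact (Finset.mem_erase.mp hu).1 ((hj.symm.trans h).symm)
          have hevj : e v j = 1 := by rw [he, if_pos hj]
          rw [hB, hevj, hj]
          field_simp
          ring
        · have hevj : e v j = 0 := by rw [he, if_neg hj]
          have hB : ∑ u ∈ Finset.univ.erase v, x u * e u j = x j := by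
            have : ∀ u ∈ Finset.univ.erase v, x u * e u j
                = if j = u then x u else 0 := by
              intro u _
              rw [he]
              by_cases h : j = u <;> simp [h]
            rw [Finset.sum_congr rfl this,
              Finset.sum_ite_eq (Finset.univ.erase v) j (fun u => x u),
              if_pos (Finset.mem_erase.mpr ⟨hj, Finset.mem_univ j⟩)]
          rw [hB, hevj]
          ring
      rw [← heq]
      exact hcm
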